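/- arXiv:math-ph/0506056 — 3 statements merged into one kernel-verified Lean document; each statement's English description precedes it below -/
import Mathlib

section
/- Let A be a nonempty finite type, let M be an A×A matrix with complex entries, and let k ≥ 1. Define the matrix T, indexed by words ε = (ε₀,…,ε_{k−1}) ∈ A^k (i.e. functions Fin k → A), by T_{ε′,ε} = M_{ε′_{k−1}, ε₀} if ε′_i = ε_{i+1} for all 0 ≤ i ≤ k−2, and T_{ε′,ε} = 0 otherwise. Then the k-th matrix power of T satisfies (T^k)_{ε′,ε} = ∏_{i=0}^{k−1} M_{ε′_i, ε_i}; in other words, T^k acts on the k-fold tensor power (ℂ^A)^{⊗k} as M applied in each tensor factor. -/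
open scoped Classical

theorem aux_pow {A : Type*} [Fintype A] [Nonempty A] [DecidableEq A] (M : Matrix A A ℂ)
    (k : ℕ) (hk : 0 < k) (T : Matrix (Fin k → A) (Fin k → A) ℂ)
    (hT₁ : ∀ ε' ε : Fin k → A,
      (∀ (i : ℕ) (hi : i + 1 < k), ε' ⟨i, Nat.lt_of_succ_lt hi⟩ = ε ⟨i + 1, hi⟩) →
      T ε' ε = M (ε' ⟨k - 1, Nat.sub_lt hk Nat.one_pos⟩) (ε ⟨0, hk⟩))
    (hT₂ : ∀ ε' ε : Fin k → A,
      ¬ (∀ (i : ℕ) (hi : i + 1 < k), ε' ⟨i, Nat.lt_of_succ_lt hi⟩ = ε ⟨i + 1, hi⟩) →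
      T ε' ε = 0) :
    ∀ (m : ℕ) (_hm1 : 1 ≤ m) (_hmk : m ≤ k), ∀ ε' ε : Fin k → A,
      (T ^ m) ε' ε =
        if (∀ (i : ℕ) (hi : i + m < k), ε' ⟨i, by omega⟩ = ε ⟨i + m, hi⟩) then
          ∏ j : Fin m, M (ε' ⟨k - m + (j : ℕ), by omega⟩) (ε ⟨(j : ℕ), by omega⟩)
        else 0 := by
  intro m
  induction m with
  | zero => intro h1; omega
  | succ m ih =>
    intro _ hmk ε' ε
    rcases Nat.eq_zero_or_pos m with hm0 | hm0
    · -- base case m + 1 = 1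
      subst hm0
      rw [pow_one]
      by_cases hc : ∀ (i : ℕ) (hi : i + 1 < k),
          ε' ⟨i, Nat.lt_of_succ_lt hi⟩ = ε ⟨i + 1, hi⟩
      · rw [if_pos hc, hT₁ ε' ε hc, Fin.prod_univ_one]
        congr 1
      · rw [if_neg hc, hT₂ ε' ε hc]
    · -- inductive step
      have IH := ih hm0 (by omega)
      have hklt : k - 1 < k := by omega
      have fmk : ∀ {x y : ℕ} (hx : x < k) (hy : y < k), x = y →
          (⟨x, hx⟩ : Fin k) = (⟨y, hy⟩ : Fin k) := by
        intro x y hx hy h; subst h; rfl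
      set D : A → (Fin k → A) :=
        fun a i => if h : (i : ℕ) + 1 < k then ε ⟨(i : ℕ) + 1, h⟩ else a with hD
      have hDlast : ∀ a, D a ⟨k - 1, hklt⟩ = a := by
        intro a
        simp only [hD]
        rw [dif_neg (by omega)]
      have hDlt : ∀ (a : A) (i : ℕ) (hik : i < k) (hi : i + 1 < k),
          D a ⟨i, hik⟩ = ε ⟨i + 1, hi⟩ := by
        intro a i hik hi
        simp only [hD]
        rw [dif_pos hi]
      have hcond_iff : ∀ δ : Fin k → A,
          (∀ (i : ℕ) (hi : i + 1 < k), δ ⟨i, Nat.lt_of_succ_lt hi⟩ = ε ⟨i + 1, hi⟩) ↔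
            δ = D (δ ⟨k - 1, hklt⟩) := by
        intro δ
        constructor
        · intro h
          funext i
          by_cases hi : (i : ℕ) + 1 < k
          · have h1 := h i.val hi
            have h2 := hDlt (δ ⟨k - 1, hklt⟩) i.val i.isLt hi
            have : i = ⟨i.val, i.isLt⟩ := rfl
            rw [this, h1, h2]
          · have hival : i = ⟨k - 1, hklt⟩ := by
              apply Fin.ext
              have := i.isLt
              simp only []
              omega
            rw [hival, hDlast]
        · intro h i hi
          rw [h]
          exact hDlt _ i _ hi
      rw [pow_succ, Matrix.mul_apply]
      have hsum : ∑ δ : Fin k → A, (T ^ m) ε' δ * T δ ε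
          = ∑ a : A, (T ^ m) ε' (D a) * M a (ε ⟨0, hk⟩) := by
        rw [← Finset.sum_fiberwise Finset.univ (fun δ => δ ⟨k - 1, hklt⟩)
          (fun δ => (T ^ m) ε' δ * T δ ε)]
        apply Finset.sum_congr rfl
        intro a _
        rw [Finset.sum_eq_single_of_mem (D a)]
        · congr 1
          rw [hT₁ (D a) ε (fun i hi => hDlt a i _ hi), hDlast]
        · simp [hDlast a]
        · intro δ hδ hne
          have ha : δ ⟨k - 1, hklt⟩ = a := by simpa using hδ
          have hnc : ¬ (∀ (i : ℕ) (hi : i + 1 < k),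
              δ ⟨i, Nat.lt_of_succ_lt hi⟩ = ε ⟨i + 1, hi⟩) := by
            rw [hcond_iff δ, ha]
            exact hne
          rw [hT₂ δ ε hnc, mul_zero]
      rw [hsum]
      have hDIH : ∀ a, (T ^ m) ε' (D a) =
          if (∀ (i : ℕ) (hi : i + (m + 1) < k),
                ε' ⟨i, by omega⟩ = ε ⟨i + (m + 1), hi⟩) ∧ a = ε' ⟨k - (m + 1), by omega⟩ then
            ∏ j : Fin m, M (ε' ⟨k - (m + 1) + ((j : ℕ) + 1), by omega⟩) (ε ⟨(j : ℕ) + 1, by omega⟩)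
          else 0 := by
        intro a
        rw [IH ε' (D a)]
        by_cases hC : (∀ (i : ℕ) (hi : i + (m + 1) < k),
            ε' ⟨i, by omega⟩ = ε ⟨i + (m + 1), hi⟩) ∧ a = ε' ⟨k - (m + 1), by omega⟩
        · rw [if_pos hC, if_pos ?_]
          · apply Finset.prod_congr rfl
            intro j _
            have hj1 : (j : ℕ) + 1 < k := by omega
            rw [hDlt a (j : ℕ) (by omega) hj1]
            congr 1
            exact congrArg ε' (fmk _ _ (by omega))
          · intro i hi
            by_cases h2 : i + m + 1 < k
            · rw [hDlt a (i + m) (by omega) h2]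
              exact hC.1 i h2
            · have hieq : i = k - (m + 1) := by omega
              have : (⟨i + m, hi⟩ : Fin k) = ⟨k - 1, hklt⟩ := fmk _ _ (by omega)
              rw [this, hDlast, hC.2]
              exact congrArg ε' (fmk _ _ (by omega))
        · rw [if_neg hC, if_neg ?_]
          intro hall
          apply hC
          constructor
          · intro i hi
            have h1 := hall i (by omega)
            rw [hDlt a (i + m) (by omega) (by omega)] at h1
            rw [h1]
            exact congrArg ε (fmk _ _ (by omega))
          · have h1 := hall (k - (m + 1)) (by omega)
            have : (⟨k - (m + 1) + m, by omega⟩ : Fin k) = ⟨k - 1, hklt⟩ := fmk _ _ (by omega)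
            rw [this, hDlast] at h1
            exact h1.symm
      simp only [hDIH]
      by_cases hC : ∀ (i : ℕ) (hi : i + (m + 1) < k),
          ε' ⟨i, by omega⟩ = ε ⟨i + (m + 1), hi⟩
      · rw [if_pos hC]
        simp only [eq_true hC, true_and, ite_mul, zero_mul]
        rw [Finset.sum_ite_eq' Finset.univ (ε' ⟨k - (m + 1), by omega⟩)
          (fun a => (∏ j : Fin m, M (ε' ⟨k - (m + 1) + ((j : ℕ) + 1), by omega⟩)
            (ε ⟨(j : ℕ) + 1, by omega⟩)) * M a (ε ⟨0, hk⟩))]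
        rw [if_pos (Finset.mem_univ _), Fin.prod_univ_succ, mul_comm]
        congr 1
      · rw [if_neg hC]
        apply Finset.sum_eq_zero
        intro a _
        rw [if_neg (fun h => hC h.1), zero_mul]

/-- If `T` is the shift-type matrix indexed by words of length `k ≥ 1`
over the alphabet `A`, built from an `A × A` matrix `M`
(`T ε' ε = M (ε'_{k-1}) (ε_0)` when `ε'_i = ε_{i+1}` for all `0 ≤ i ≤ k-2`, and `0` otherwise),
then `(T ^ k) ε' ε = ∏ i, M (ε' i) (ε i)`, i.e. `T ^ k` acts on `(ℂ^A)^{⊗ k}` as `M`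
in each tensor factor. -/
theorem stmt_0 {A : Type*} [Fintype A] [Nonempty A] [DecidableEq A] (M : Matrix A A ℂ)
    (k : ℕ) (hk : 0 < k) (T : Matrix (Fin k → A) (Fin k → A) ℂ)
    (hT₁ : ∀ ε' ε : Fin k → A,
      (∀ (i : ℕ) (hi : i + 1 < k), ε' ⟨i, Nat.lt_of_succ_lt hi⟩ = ε ⟨i + 1, hi⟩) →
      T ε' ε = M (ε' ⟨k - 1, Nat.sub_lt hk Nat.one_pos⟩) (ε ⟨0, hk⟩))
    (hT₂ : ∀ ε' ε : Fin k → A,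
      ¬ (∀ (i : ℕ) (hi : i + 1 < k), ε' ⟨i, Nat.lt_of_succ_lt hi⟩ = ε ⟨i + 1, hi⟩) →
      T ε' ε = 0) :
    ∀ ε' ε : Fin k → A, (T ^ k) ε' ε = ∏ i : Fin k, M (ε' i) (ε i) := by
  intro ε' ε
  rw [aux_pow M k hk T hT₁ hT₂ k hk le_rfl ε' ε,
    if_pos (fun i hi => absurd hi (by omega))]
  apply Finset.prod_congr rfl
  intro j _
  have h1 : (⟨k - k + (j : ℕ), by omega⟩ : Fin k) = j := by ext; simp
  have h2 : (⟨(j : ℕ), by omega⟩ : Fin k) = j := by ext; simp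
  rw [h1, h2]
end

section
/- Let m and n be nonempty finite types, and let A be an m×m complex matrix and B an n×n complex matrix. Then the spectrum of the Kronecker product A ⊗ B equals the set of products {α·β : α ∈ spectrum(A), β ∈ spectrum(B)}. -/
open Kronecker

/-- Character values on a finite-dimensional subalgebra lie in the ambient spectrum. -/
lemma algHom_apply_mem_spectrum_coe {M : Type*} [Ring M] [Algebra ℂ M] [FiniteDimensional ℂ M]
    {S : Subalgebra ℂ M} (φ : S →ₐ[ℂ] ℂ) (x : S) : φ x ∈ spectrum ℂ (x : M) := by
  rw [spectrum.mem_iff]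
  intro hu
  set y : S := algebraMap ℂ S (φ x) - x with hy
  have hyc : (y : M) = algebraMap ℂ M (φ x) - (x : M) := by
    push_cast [hy]; rfl
  rw [← hyc] at hu
  have hinj : Function.Injective (LinearMap.mulLeft ℂ y) := by
    intro s t hst
    simp only [LinearMap.mulLeft_apply] at hst
    have : (y : M) * s = (y : M) * t := by
      exact_mod_cast congrArg (Subtype.val) hst
    exact Subtype.ext (hu.mul_left_cancel this)
  have hsurj := (LinearMap.injective_iff_surjective).mp hinj
  obtain ⟨w, hw⟩ := hsurj 1
  simp only [LinearMap.mulLeft_apply] at hw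
  have := congrArg φ hw
  rw [map_mul, map_one] at this
  have hφy : φ y = 0 := by simp [hy]
  rw [hφy, zero_mul] at this
  exact zero_ne_one this

/-- Every spectral value of an element of a commutative finite-dimensional complex algebra
is attained by a character. -/
lemma exists_char {S : Type*} [Ring S] [Algebra ℂ S] [FiniteDimensional ℂ S]
    (hcomm : ∀ p q : S, p * q = q * p) {x : S} {z : ℂ} (hz : z ∈ spectrum ℂ x) :
    ∃ φ : S →ₐ[ℂ] ℂ, φ x = z := by
  letI : CommRing S := { ‹Ring S› with mul_comm := hcomm }
  rw [spectrum.mem_iff] at hz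
  obtain ⟨I, hI, hmem⟩ := exists_max_ideal_of_mem_nonunits hz
  haveI := hI
  haveI : Module.Finite ℂ (S ⧸ I) := Module.Finite.quotient ℂ I
  haveI : Algebra.IsIntegral ℂ (S ⧸ I) := Algebra.IsIntegral.of_finite ℂ _
  have hsurj : Function.Surjective (algebraMap ℂ (S ⧸ I)) :=
    IsAlgClosed.algebraMap_bijective_of_isIntegral.2
  have hinj : Function.Injective (algebraMap ℂ (S ⧸ I)) :=
    (algebraMap ℂ (S ⧸ I)).injective
  let e : ℂ ≃ₐ[ℂ] (S ⧸ I) := AlgEquiv.ofBijective (Algebra.ofId ℂ (S ⧸ I)) ⟨hinj, hsurj⟩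
  refine ⟨e.symm.toAlgHom.comp (Ideal.Quotient.mkₐ ℂ I), ?_⟩
  have h0 : Ideal.Quotient.mk I (algebraMap ℂ S z - x) = 0 :=
    Ideal.Quotient.eq_zero_iff_mem.mpr hmem
  have hx : Ideal.Quotient.mk I x = e z := by
    have := sub_eq_zero.mp (by rwa [map_sub] at h0)
    rw [← this]
    rfl
  simp [AlgHom.comp_apply, Ideal.Quotient.mkₐ_eq_mk, hx]

lemma sub_kron {l m n p : Type*} (A B : Matrix l m ℂ) (C : Matrix n p ℂ) :
    (A - B) ⊗ₖ C = A ⊗ₖ C - B ⊗ₖ C := by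
  ext ⟨i, j⟩ ⟨i', j'⟩
  simp [Matrix.kroneckerMap_apply, sub_mul]

lemma kron_sub {l m n p : Type*} (A : Matrix l m ℂ) (B C : Matrix n p ℂ) :
    A ⊗ₖ (B - C) = A ⊗ₖ B - A ⊗ₖ C := by
  ext ⟨i, j⟩ ⟨i', j'⟩
  simp [Matrix.kroneckerMap_apply, mul_sub]

lemma spectrum_kronecker_one {m n : Type*} [Fintype m] [Nonempty m] [DecidableEq m]
    [Fintype n] [Nonempty n] [DecidableEq n] (A : Matrix m m ℂ) :
    spectrum ℂ (A ⊗ₖ (1 : Matrix n n ℂ)) = spectrum ℂ A := by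
  ext z
  simp only [spectrum.mem_iff, not_iff_not]
  have key : algebraMap ℂ (Matrix (m × n) (m × n) ℂ) z - A ⊗ₖ (1 : Matrix n n ℂ)
      = (algebraMap ℂ (Matrix m m ℂ) z - A) ⊗ₖ (1 : Matrix n n ℂ) := by
    rw [sub_kron]
    congr 1
    rw [Matrix.algebraMap_eq_diagonal, Matrix.algebraMap_eq_diagonal, ← Matrix.diagonal_one,
      Matrix.diagonal_kronecker_diagonal]
    simp [Pi.algebraMap_def]
  rw [key, Matrix.isUnit_iff_isUnit_det, Matrix.isUnit_iff_isUnit_det, Matrix.det_kronecker,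
    Matrix.det_one, one_pow, mul_one, isUnit_iff_ne_zero, isUnit_iff_ne_zero,
    pow_ne_zero_iff Fintype.card_ne_zero]

lemma spectrum_one_kronecker {m n : Type*} [Fintype m] [Nonempty m] [DecidableEq m]
    [Fintype n] [Nonempty n] [DecidableEq n] (B : Matrix n n ℂ) :
    spectrum ℂ ((1 : Matrix m m ℂ) ⊗ₖ B) = spectrum ℂ B := by
  ext z
  simp only [spectrum.mem_iff, not_iff_not]
  have key : algebraMap ℂ (Matrix (m × n) (m × n) ℂ) z - (1 : Matrix m m ℂ) ⊗ₖ B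
      = (1 : Matrix m m ℂ) ⊗ₖ (algebraMap ℂ (Matrix n n ℂ) z - B) := by
    rw [kron_sub]
    congr 1
    rw [Matrix.algebraMap_eq_diagonal, Matrix.algebraMap_eq_diagonal, ← Matrix.diagonal_one,
      Matrix.diagonal_kronecker_diagonal]
    simp [Pi.algebraMap_def]
  rw [key, Matrix.isUnit_iff_isUnit_det, Matrix.isUnit_iff_isUnit_det, Matrix.det_kronecker,
    Matrix.det_one, one_pow, one_mul, isUnit_iff_ne_zero, isUnit_iff_ne_zero,
    pow_ne_zero_iff Fintype.card_ne_zero]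

lemma mul_mem_spectrum_kron {m n : Type*} [Fintype m] [DecidableEq m]
    [Fintype n] [DecidableEq n] (A : Matrix m m ℂ) (B : Matrix n n ℂ) {α β : ℂ}
    (hα : α ∈ spectrum ℂ A) (hβ : β ∈ spectrum ℂ B) :
    α * β ∈ spectrum ℂ (A ⊗ₖ B) := by
  rw [← AlgEquiv.spectrum_eq Matrix.toLinAlgEquiv' A,
    ← Module.End.hasEigenvalue_iff_mem_spectrum] at hα
  rw [← AlgEquiv.spectrum_eq Matrix.toLinAlgEquiv' B,
    ← Module.End.hasEigenvalue_iff_mem_spectrum] at hβ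
  obtain ⟨v, hv⟩ := hα.exists_hasEigenvector
  obtain ⟨w, hw⟩ := hβ.exists_hasEigenvector
  have hv1 : A.mulVec v = α • v := hv.apply_eq_smul
  have hw1 : B.mulVec w = β • w := hw.apply_eq_smul
  set u : m × n → ℂ := fun p => v p.1 * w p.2 with hu
  have hune : u ≠ 0 := by
    obtain ⟨i, hi⟩ := Function.ne_iff.mp hv.right
    obtain ⟨j, hj⟩ := Function.ne_iff.mp hw.right
    intro h
    have := congrFun h (i, j)
    simp only [hu, Pi.zero_apply, mul_eq_zero] at this
    tauto
  have key : (A ⊗ₖ B).mulVec u = (α * β) • u := by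
    funext ⟨i, j⟩
    calc (A ⊗ₖ B).mulVec u (i, j)
        = ∑ i', ∑ j', (A i i' * v i') * (B j j' * w j') := by
          simp only [Matrix.mulVec, dotProduct, Fintype.sum_prod_type,
            Matrix.kroneckerMap_apply, hu]
          exact Finset.sum_congr rfl fun i' _ => Finset.sum_congr rfl fun j' _ => by ring
      _ = (∑ i', A i i' * v i') * (∑ j', B j j' * w j') := (Finset.sum_mul_sum _ _ _ _).symm
      _ = (A.mulVec v i) * (B.mulVec w j) := rfl
      _ = (α * β) • u (i, j) := by
          rw [hv1, hw1]; simp [hu]; ring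
  rw [← AlgEquiv.spectrum_eq Matrix.toLinAlgEquiv' (A ⊗ₖ B),
    ← Module.End.hasEigenvalue_iff_mem_spectrum]
  apply Module.End.hasEigenvalue_of_hasEigenvector (x := u)
  refine ⟨Module.End.mem_eigenspace_iff.mpr ?_, hune⟩
  simpa using key

/-- The spectrum of the Kronecker product `A ⊗ B` of two square complex
matrices equals the set of products `α·β` of eigenvalues `α` of `A` and `β` of `B`. -/
theorem stmt_1 {m n : Type*} [Fintype m] [Nonempty m] [DecidableEq m]
    [Fintype n] [Nonempty n] [DecidableEq n]
    (A : Matrix m m ℂ) (B : Matrix n n ℂ) :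
    spectrum ℂ (A ⊗ₖ B) =
      {z : ℂ | ∃ α ∈ spectrum ℂ A, ∃ β ∈ spectrum ℂ B, z = α * β} := by
  ext z
  constructor
  · intro hz
    set a : Matrix (m × n) (m × n) ℂ := A ⊗ₖ (1 : Matrix n n ℂ) with hadef
    set b : Matrix (m × n) (m × n) ℂ := (1 : Matrix m m ℂ) ⊗ₖ B with hbdef
    have hab : a * b = A ⊗ₖ B := by
      rw [hadef, hbdef, ← Matrix.mul_kronecker_mul, mul_one, one_mul]
    have hba : b * a = A ⊗ₖ B := by
      rw [hadef, hbdef, ← Matrix.mul_kronecker_mul, mul_one, one_mul]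
    set S := Algebra.adjoin ℂ ({a, b} : Set (Matrix (m × n) (m × n) ℂ)) with hS
    have hgen : ∀ x ∈ ({a, b} : Set (Matrix (m × n) (m × n) ℂ)),
        ∀ y ∈ ({a, b} : Set (Matrix (m × n) (m × n) ℂ)), x * y = y * x := by
      rintro x (rfl | rfl) y (rfl | rfl) <;> simp_all
    letI : CommRing S := Algebra.adjoinCommRingOfComm ℂ hgen
    have hcomm : ∀ p q : S, p * q = q * p := fun p q => mul_comm p q
    have ha : a ∈ S := Algebra.subset_adjoin (Set.mem_insert _ _)
    have hbS : b ∈ S := Algebra.subset_adjoin (Set.mem_insert_of_mem _ rfl)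
    set a' : S := ⟨a, ha⟩
    set b' : S := ⟨b, hbS⟩
    set x : S := a' * b' with hx
    have hxc : (x : Matrix (m × n) (m × n) ℂ) = A ⊗ₖ B := by
      rw [hx]; push_cast; exact hab
    have hz' : z ∈ spectrum ℂ x := by
      apply AlgHom.spectrum_apply_subset S.val x
      show z ∈ spectrum ℂ (x : Matrix (m × n) (m × n) ℂ)
      rwa [hxc]
    obtain ⟨φ, hφ⟩ := exists_char hcomm hz'
    refine ⟨φ a', ?_, φ b', ?_, ?_⟩
    · have := algHom_apply_mem_spectrum_coe φ a'
      rwa [show ((a' : S) : Matrix (m × n) (m × n) ℂ) = a from rfl, hadef,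
        spectrum_kronecker_one] at this
    · have := algHom_apply_mem_spectrum_coe φ b'
      rwa [show ((b' : S) : Matrix (m × n) (m × n) ℂ) = b from rfl, hbdef,
        spectrum_one_kronecker] at this
    · rw [← hφ, hx, map_mul]
  · rintro ⟨α, hα, β, hβ, rfl⟩
    exact mul_mem_spectrum_kron A B hα hβ
end

section
/- Let N = 3^k with k ≥ 1, let W_N be the Walsh–Fourier matrix, and let D be the N×N block-diagonal matrix diag(W_{N/3}, 0, W_{N/3}) (with three blocks of size N/3; for k = 1 the blocks W_1 are the 1×1 identity). Then for all 0 ≤ j, j′ ≤ N−1, (W_N*·D)_{j,j′} = (T_k)_{ε(j),ε(j′)}, where ε(j) = (ε₀(j),…,ε_{k−1}(j)) is the word of ternary digits of j. In other words, the Walsh quantization W_N^{−1}·diag(W_{N/3},0,W_{N/3}) of the open baker's map coincides, under the ternary-digit identification ℂ^{3^k} ≅ (ℂ³)^{⊗k}, with the shift-type operator T_k. -/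
open Matrix

/-- The `ℓ`-th ternary digit of `j` in the expansion `j = Σ_{ℓ=0}^{k-1} ε_ℓ(j)·3^{k-1-ℓ}`. -/
def tdigit (k ℓ j : ℕ) : ℕ := j / 3 ^ (k - 1 - ℓ) % 3

/-- The word `ε(j) = (ε₀(j),…,ε_{k−1}(j))` of ternary digits of `j`. -/
def tword (k j : ℕ) : Fin k → Fin 3 :=
  fun ℓ => ⟨tdigit k ℓ j, Nat.mod_lt _ (by norm_num)⟩

/-- The Walsh–Fourier matrix `W_N`, `N = 3^k`, with entries
`(W_N)_{j,j'} = 3^{−k/2}·exp(−(2πi/3)·Σ_{ℓ+ℓ'=k−1} ε_ℓ(j)·ε_{ℓ'}(j'))`. -/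
noncomputable def Walsh (k : ℕ) : Matrix (Fin (3 ^ k)) (Fin (3 ^ k)) ℂ :=
  Matrix.of fun j j' : Fin (3 ^ k) =>
    (((Real.sqrt 3 : ℝ) : ℂ)⁻¹) ^ k *
      Complex.exp (-(2 * Real.pi * Complex.I / 3) *
        ((∑ ℓ ∈ Finset.range k, tdigit k ℓ (j : ℕ) * tdigit k (k - 1 - ℓ) (j' : ℕ) : ℕ) : ℂ))

/-- The block-diagonal matrix `D = diag(W_{N/3}, 0, W_{N/3})` of size `N = 3^{k+1}`. -/
noncomputable def WalshBlock (k : ℕ) : Matrix (Fin (3 ^ (k + 1))) (Fin (3 ^ (k + 1))) ℂ :=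
  Matrix.of fun j j' : Fin (3 ^ (k + 1)) =>
    if h : (j : ℕ) < 3 ^ k ∧ (j' : ℕ) < 3 ^ k then
      Walsh k ⟨(j : ℕ), h.1⟩ ⟨(j' : ℕ), h.2⟩
    else if h' : 2 * 3 ^ k ≤ (j : ℕ) ∧ 2 * 3 ^ k ≤ (j' : ℕ) then
      Walsh k ⟨(j : ℕ) - 2 * 3 ^ k, by have h1 := j.isLt; have h2 : (3:ℕ) ^ (k+1) = 3 ^ k * 3 := pow_succ 3 k; omega⟩
              ⟨(j' : ℕ) - 2 * 3 ^ k, by have h1 := j'.isLt; have h2 : (3:ℕ) ^ (k+1) = 3 ^ k * 3 := pow_succ 3 k; omega⟩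
    else 0

/-- The 3×3 matrix `M` with entries `M_{a,b} = 3^{-1/2}·exp(2πi·a·b/3)` for
`b ∈ {0,2}` and `M_{a,1} = 0`. -/
noncomputable def Mbaker : Matrix (Fin 3) (Fin 3) ℂ :=
  Matrix.of fun a b : Fin 3 =>
    if b = 1 then 0
    else ((Real.sqrt 3 : ℝ) : ℂ)⁻¹ *
      Complex.exp (2 * Real.pi * Complex.I * (a : ℕ) * (b : ℕ) / 3)

/-- The Walsh-quantized open baker's matrix `T_k` of size `3^k`, indexed by words
`ε ∈ {0,1,2}^k`: `(T_k)_{ε',ε} = M_{ε'_{k-1}, ε_0}` if `ε'_i = ε_{i+1}` for all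
`0 ≤ i ≤ k-2`, and `0` otherwise. -/
noncomputable def Tbaker : (k : ℕ) → Matrix (Fin k → Fin 3) (Fin k → Fin 3) ℂ
  | 0 => 0
  | (k + 1) => Matrix.of fun ε' ε =>
      if ∀ i : Fin k, ε' i.castSucc = ε i.succ then Mbaker (ε' (Fin.last k)) (ε 0) else 0



noncomputable def χ (n : ℤ) : ℂ := Complex.exp (2 * Real.pi * Complex.I * n / 3)

lemma χ_add (m n : ℤ) : χ (m + n) = χ m * χ n := by
  rw [χ, χ, χ, ← Complex.exp_add]
  congr 1
  push_cast
  ring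

lemma χ_zero : χ 0 = 1 := by simp [χ]

lemma χ_eq_one_iff (n : ℤ) : χ n = 1 ↔ (3:ℤ) ∣ n := by
  rw [χ, Complex.exp_eq_one_iff]
  constructor
  · rintro ⟨m, hm⟩
    refine ⟨m, ?_⟩
    have hπ : (Real.pi : ℂ) ≠ 0 := by
      simpa using Real.pi_ne_zero
    have hI : Complex.I ≠ 0 := Complex.I_ne_zero
    have : (n : ℂ) = 3 * m := by
      field_simp at hm
      have h2 : (2:ℂ) * Real.pi * Complex.I * n = 2 * Real.pi * Complex.I * (3 * m) := by
        rw [hm]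
      have := mul_left_cancel₀ (by simp [hπ, hI] : (2:ℂ) * Real.pi * Complex.I ≠ 0) h2
      exact this
    exact_mod_cast this
  · rintro ⟨m, rfl⟩
    exact ⟨m, by push_cast; ring⟩

lemma χ_nsmul (e : ℕ) (d : ℤ) : χ (e * d) = χ d ^ e := by
  induction e with
  | zero => simp [χ_zero]
  | succ e ih =>
    rw [pow_succ, ← ih, ← χ_add]
    congr 1
    push_cast
    ring

lemma sum3 (d : ℤ) : ∑ e : Fin 3, χ (e * d) = if (3:ℤ) ∣ d then 3 else 0 := by
  have h : ∑ e : Fin 3, χ (e * d) = 1 + χ d + χ d ^ 2 := by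
    rw [Fin.sum_univ_three]
    simp [χ_zero]
    rw [show (2:ℤ) * d = ((2:ℕ):ℤ) * d by norm_num, χ_nsmul]
  rw [h]
  split_ifs with hd
  · rw [(χ_eq_one_iff d).2 hd]; ring
  · have h3 : χ d ^ 3 = 1 := by
      rw [← χ_nsmul]
      exact (χ_eq_one_iff _).2 ⟨d, by push_cast; ring⟩
    have hne : χ d - 1 ≠ 0 := sub_ne_zero.2 (fun h => hd ((χ_eq_one_iff d).1 h))
    have : (χ d - 1) * (1 + χ d + χ d ^ 2) = 0 := by
      have : (χ d - 1) * (1 + χ d + χ d ^ 2) = χ d ^ 3 - 1 := by ring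
      rw [this, h3]; ring
    exact (mul_eq_zero.1 this).resolve_left hne


lemma tdigit_lt (k ℓ j : ℕ) : tdigit k ℓ j < 3 := Nat.mod_lt _ (by norm_num)

lemma tdigit_zero_split {k a m0 : ℕ} (ha : a < 3) (hm : m0 < 3 ^ k) :
    tdigit (k + 1) 0 (a * 3 ^ k + m0) = a := by
  unfold tdigit
  have h1 : k + 1 - 1 - 0 = k := by omega
  rw [h1, mul_comm a, Nat.mul_add_div (by positivity), Nat.div_eq_of_lt hm]
  simp [Nat.mod_eq_of_lt ha]

lemma tdigit_succ_split {k ℓ a m0 : ℕ} (hℓ : ℓ < k) (hm : m0 < 3 ^ k) :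
    tdigit (k + 1) (ℓ + 1) (a * 3 ^ k + m0) = tdigit k ℓ m0 := by
  unfold tdigit
  have h1 : k + 1 - 1 - (ℓ + 1) = k - 1 - ℓ := by omega
  rw [h1]
  set e := k - 1 - ℓ with he
  have hek : e + 1 ≤ k := by omega
  have hpow : (3:ℕ) ^ k = 3 ^ e * 3 * 3 ^ (k - e - 1) := by
    rw [← pow_succ, ← pow_add]
    congr 1
    omega
  have h2 : a * 3 ^ k + m0 = 3 ^ e * (3 * (a * 3 ^ (k - e - 1))) + m0 := by
    rw [hpow]; ring
  rw [h2, Nat.mul_add_div (by positivity), Nat.mul_add_mod]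

def splitEquiv (k : ℕ) : Fin 3 × Fin (3 ^ k) ≃ Fin (3 ^ (k + 1)) where
  toFun p := ⟨p.1 * 3 ^ k + p.2, by
    have h1 : (p.1 : ℕ) < 3 := p.1.isLt
    have h2 : (p.2 : ℕ) < 3 ^ k := p.2.isLt
    have h3 : (3:ℕ) ^ (k+1) = 3 ^ k * 3 := pow_succ 3 k
    nlinarith⟩
  invFun m := (⟨(m : ℕ) / 3 ^ k, by
      have := m.isLt
      exact Nat.div_lt_of_lt_mul (by rwa [← pow_succ])⟩,
    ⟨(m : ℕ) % 3 ^ k, Nat.mod_lt _ (by positivity)⟩)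
  left_inv p := by
    ext
    · simp only
      rw [mul_comm, Nat.mul_add_div (by positivity), Nat.div_eq_of_lt p.2.isLt, add_zero]
    · simp only
      rw [mul_comm, Nat.mul_add_mod, Nat.mod_eq_of_lt p.2.isLt]
  right_inv m := by
    ext
    simp only
    rw [mul_comm]
    exact Nat.div_add_mod _ _

@[simp] lemma splitEquiv_val (k : ℕ) (a : Fin 3) (m0 : Fin (3 ^ k)) :
    ((splitEquiv k (a, m0)) : ℕ) = a * 3 ^ k + m0 := rfl

lemma CS (k : ℕ) (d : ℕ → ℤ) :
    ∑ m0 : Fin (3 ^ k), χ (∑ ℓ ∈ Finset.range k, (tdigit k ℓ (m0 : ℕ) : ℤ) * d ℓ)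
      = ∏ ℓ ∈ Finset.range k, (if (3:ℤ) ∣ d ℓ then 3 else 0) := by
  induction k generalizing d with
  | zero => simp [χ_zero]
  | succ k ih =>
    rw [← Equiv.sum_comp (splitEquiv k)
      (fun m0 : Fin (3 ^ (k+1)) => χ (∑ ℓ ∈ Finset.range (k+1), (tdigit (k+1) ℓ (m0 : ℕ) : ℤ) * d ℓ)),
      Fintype.sum_prod_type]
    have key : ∀ (a : Fin 3) (m0 : Fin (3 ^ k)),
        χ (∑ ℓ ∈ Finset.range (k+1), (tdigit (k+1) ℓ ((splitEquiv k (a, m0)) : ℕ) : ℤ) * d ℓ)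
          = χ (((a : ℕ) : ℤ) * d 0) * χ (∑ ℓ ∈ Finset.range k, (tdigit k ℓ (m0 : ℕ) : ℤ) * d (ℓ + 1)) := by
      intro a m0
      rw [Finset.sum_range_succ']
      rw [← χ_add]
      congr 1
      rw [splitEquiv_val, tdigit_zero_split a.isLt m0.isLt]
      rw [add_comm]
      congr 1
      refine Finset.sum_congr rfl fun ℓ hℓ => ?_
      rw [tdigit_succ_split (Finset.mem_range.1 hℓ) m0.isLt]
    simp only [key]
    rw [← Finset.sum_mul_sum]
    rw [ih, Finset.prod_range_succ']
    have h3 : ∑ a : Fin 3, χ (((a : ℕ) : ℤ) * d 0) = if (3:ℤ) ∣ d 0 then 3 else 0 := by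
      rw [← sum3]
    rw [h3]
    ring

lemma tdigit_mod (k ℓ : ℕ) (hℓ : ℓ < k) (x : ℕ) :
    tdigit k ℓ (x % 3 ^ k) = tdigit (k + 1) (ℓ + 1) x := by
  conv_rhs => rw [show x = (x / 3 ^ k) * 3 ^ k + x % 3 ^ k by rw [mul_comm, Nat.div_add_mod]]
  rw [tdigit_succ_split hℓ (Nat.mod_lt _ (by positivity))]

lemma lt_of_div_eq_zero {n x : ℕ} (hn : 0 < n) (h : x / n = 0) : x < n := by
  have h1 := Nat.div_add_mod x n
  rw [h] at h1
  have h2 := Nat.mod_lt x hn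
  omega

lemma ge2_of_div_eq_two {n x : ℕ} (h : x / n = 2) : 2 * n ≤ x := by
  have h1 := Nat.div_mul_le_self x n
  rw [h] at h1
  omega

lemma walsh_eq (k : ℕ) (m j : Fin (3 ^ k)) :
    Walsh k m j = (((Real.sqrt 3 : ℝ) : ℂ)⁻¹) ^ k *
      χ (-((∑ ℓ ∈ Finset.range k, tdigit k ℓ (m : ℕ) * tdigit k (k - 1 - ℓ) (j : ℕ) : ℕ) : ℤ)) := by
  unfold Walsh χ
  rw [Matrix.of_apply]
  congr 1
  congr 1
  push_cast
  ring

lemma star_walsh (k : ℕ) (m j : Fin (3 ^ k)) :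
    star (Walsh k m j) = (((Real.sqrt 3 : ℝ) : ℂ)⁻¹) ^ k *
      χ ((∑ ℓ ∈ Finset.range k, tdigit k ℓ (m : ℕ) * tdigit k (k - 1 - ℓ) (j : ℕ) : ℕ)) := by
  unfold Walsh χ
  rw [Matrix.of_apply, star_mul']
  congr 1
  · simp only [Complex.star_def, map_pow, map_inv₀, Complex.conj_ofReal]
  · rw [Complex.star_def, ← Complex.exp_conj]
    congr 1
    simp only [_root_.map_mul, map_neg, map_div₀, Complex.conj_I, map_ofNat, Complex.conj_natCast]
    rw [Complex.conj_ofReal]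
    push_cast
    ring

lemma WalshBlock_apply (k : ℕ) (m j' : Fin (3 ^ (k + 1))) :
    WalshBlock k m j' =
      if (m : ℕ) / 3 ^ k = (j' : ℕ) / 3 ^ k ∧ (j' : ℕ) / 3 ^ k ≠ 1 then
        (((Real.sqrt 3 : ℝ) : ℂ)⁻¹) ^ k *
          χ (-((∑ ℓ ∈ Finset.range k, tdigit (k + 1) (ℓ + 1) (m : ℕ) * tdigit (k + 1) (k + 1 - 1 - ℓ) (j' : ℕ) : ℕ) : ℤ))
      else 0 := by
  have hp : (0:ℕ) < 3 ^ k := by positivity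
  have hm := m.isLt
  have hj := j'.isLt
  have h3 : (3:ℕ) ^ (k + 1) = 3 ^ k * 3 := pow_succ 3 k
  have hqm : (m:ℕ) / 3 ^ k < 3 := Nat.div_lt_of_lt_mul (by omega)
  have hqj : (j':ℕ) / 3 ^ k < 3 := Nat.div_lt_of_lt_mul (by omega)
  unfold WalshBlock
  rw [Matrix.of_apply]
  by_cases hcond : (m : ℕ) / 3 ^ k = (j' : ℕ) / 3 ^ k ∧ (j' : ℕ) / 3 ^ k ≠ 1
  · rw [if_pos hcond]
    have hq02 : (j' : ℕ) / 3 ^ k = 0 ∨ (j' : ℕ) / 3 ^ k = 2 := by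
      rcases hcond with ⟨-, h2⟩
      revert h2 hqj
      generalize (j' : ℕ) / 3 ^ k = q
      intros
      omega
    rcases hq02 with hq | hq
    · have h1 : (m : ℕ) < 3 ^ k ∧ (j' : ℕ) < 3 ^ k :=
        ⟨lt_of_div_eq_zero hp (hcond.1.trans hq), lt_of_div_eq_zero hp hq⟩
      have hS : (∑ ℓ ∈ Finset.range k, tdigit k ℓ (m : ℕ) * tdigit k (k - 1 - ℓ) (j' : ℕ)) =
          ∑ ℓ ∈ Finset.range k, tdigit (k + 1) (ℓ + 1) (m : ℕ) * tdigit (k + 1) (k + 1 - 1 - ℓ) (j' : ℕ) :=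
        Finset.sum_congr rfl fun ℓ hℓ => by
          have hℓk := Finset.mem_range.1 hℓ
          rw [← Nat.mod_eq_of_lt h1.1, ← Nat.mod_eq_of_lt h1.2, tdigit_mod k ℓ hℓk,
            tdigit_mod k (k - 1 - ℓ) (by omega)]
          have he : k - 1 - ℓ + 1 = k + 1 - 1 - ℓ := by omega
          rw [he, Nat.mod_eq_of_lt h1.1, Nat.mod_eq_of_lt h1.2]
      rw [dif_pos h1, walsh_eq]
      simp only [hS]
    · have h2 : 2 * 3 ^ k ≤ (m : ℕ) ∧ 2 * 3 ^ k ≤ (j' : ℕ) :=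
        ⟨ge2_of_div_eq_two (hcond.1.trans hq), ge2_of_div_eq_two hq⟩
      have h1 : ¬((m : ℕ) < 3 ^ k ∧ (j' : ℕ) < 3 ^ k) := by omega
      have hS : (∑ ℓ ∈ Finset.range k, tdigit k ℓ ((m : ℕ) - 2 * 3 ^ k) * tdigit k (k - 1 - ℓ) ((j' : ℕ) - 2 * 3 ^ k)) =
          ∑ ℓ ∈ Finset.range k, tdigit (k + 1) (ℓ + 1) (m : ℕ) * tdigit (k + 1) (k + 1 - 1 - ℓ) (j' : ℕ) :=
        Finset.sum_congr rfl fun ℓ hℓ => by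
          have hℓk := Finset.mem_range.1 hℓ
          have em : (m : ℕ) - 2 * 3 ^ k = (m : ℕ) % 3 ^ k := by
            conv_rhs => rw [show (m:ℕ) = 3 ^ k * 2 + ((m:ℕ) - 2 * 3 ^ k) by omega]
            rw [Nat.mul_add_mod, Nat.mod_eq_of_lt (by omega)]
          have ej : (j' : ℕ) - 2 * 3 ^ k = (j' : ℕ) % 3 ^ k := by
            conv_rhs => rw [show (j':ℕ) = 3 ^ k * 2 + ((j':ℕ) - 2 * 3 ^ k) by omega]
            rw [Nat.mul_add_mod, Nat.mod_eq_of_lt (by omega)]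
          rw [em, ej, tdigit_mod k ℓ hℓk, tdigit_mod k (k - 1 - ℓ) (by omega)]
          have he : k - 1 - ℓ + 1 = k + 1 - 1 - ℓ := by omega
          rw [he]
      rw [dif_neg h1, dif_pos h2, walsh_eq]
      simp only [hS]
  · rw [if_neg hcond]
    have h1 : ¬((m : ℕ) < 3 ^ k ∧ (j' : ℕ) < 3 ^ k) := by
      rintro ⟨ha, hb⟩
      exact hcond ⟨by rw [Nat.div_eq_of_lt ha, Nat.div_eq_of_lt hb], by rw [Nat.div_eq_of_lt hb]; omega⟩
    have h2 : ¬(2 * 3 ^ k ≤ (m : ℕ) ∧ 2 * 3 ^ k ≤ (j' : ℕ)) := by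
      rintro ⟨ha, hb⟩
      have e1 : (m:ℕ) / 3 ^ k = 2 := Nat.div_eq_of_lt_le (by omega) (by omega)
      have e2 : (j':ℕ) / 3 ^ k = 2 := Nat.div_eq_of_lt_le (by omega) (by omega)
      exact hcond ⟨e1.trans e2.symm, by omega⟩
    rw [dif_neg h1, dif_neg h2]

lemma c_sq : ((((Real.sqrt 3 : ℝ) : ℂ))⁻¹) ^ 2 = (3:ℂ)⁻¹ := by
  rw [inv_pow]
  congr 1
  rw [← Complex.ofReal_pow, Real.sq_sqrt (by norm_num : (0:ℝ) ≤ 3)]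
  norm_num

lemma c_scalar (k : ℕ) : ((((Real.sqrt 3 : ℝ) : ℂ))⁻¹) ^ (2 * k + 1) * (3:ℂ) ^ k
    = (((Real.sqrt 3 : ℝ) : ℂ))⁻¹ := by
  set c : ℂ := (((Real.sqrt 3 : ℝ) : ℂ))⁻¹ with hc
  have h1 : ((3:ℂ)⁻¹) ^ k * (3:ℂ) ^ k = 1 := by
    rw [← mul_pow]
    norm_num
  calc c ^ (2 * k + 1) * 3 ^ k = ((c ^ 2) ^ k * 3 ^ k) * c := by
        rw [← pow_mul, pow_add, pow_one]; ring
    _ = (((3:ℂ)⁻¹) ^ k * 3 ^ k) * c := by rw [c_sq]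
    _ = c := by rw [h1, one_mul]

lemma term_eq (k : ℕ) (j j' : Fin (3 ^ (k + 1))) (a : Fin 3) (m0 : Fin (3 ^ k)) :
    star (Walsh (k + 1) (splitEquiv k (a, m0)) j) * WalshBlock k (splitEquiv k (a, m0)) j' =
      if (a : ℕ) = (j' : ℕ) / 3 ^ k ∧ (j' : ℕ) / 3 ^ k ≠ 1 then
        ((((Real.sqrt 3 : ℝ) : ℂ))⁻¹) ^ (2 * k + 1) * χ ((a : ℕ) * tdigit (k + 1) k (j : ℕ)) *
          χ (∑ ℓ ∈ Finset.range k, (tdigit k ℓ (m0 : ℕ) : ℤ) *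
              ((tdigit (k + 1) (k - 1 - ℓ) (j : ℕ) : ℤ) - (tdigit (k + 1) (k - ℓ) (j' : ℕ) : ℤ)))
      else 0 := by
  rw [star_walsh, WalshBlock_apply]
  have hdiv : ((splitEquiv k (a, m0) : ℕ)) / 3 ^ k = (a : ℕ) := by
    rw [splitEquiv_val, mul_comm, Nat.mul_add_div (by positivity), Nat.div_eq_of_lt m0.isLt, add_zero]
  rw [hdiv]
  split_ifs with h
  · set c : ℂ := (((Real.sqrt 3 : ℝ) : ℂ))⁻¹ with hc
    -- the two nat exponent sums
    have e1 : (∑ ℓ ∈ Finset.range (k + 1),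
        tdigit (k + 1) ℓ ((splitEquiv k (a, m0) : ℕ)) * tdigit (k + 1) (k + 1 - 1 - ℓ) (j : ℕ)) =
        (a : ℕ) * tdigit (k + 1) k (j : ℕ) +
          ∑ ℓ ∈ Finset.range k, tdigit k ℓ (m0 : ℕ) * tdigit (k + 1) (k - 1 - ℓ) (j : ℕ) := by
      rw [Finset.sum_range_succ', splitEquiv_val, tdigit_zero_split a.isLt m0.isLt]
      rw [add_comm]
      congr 1
      refine Finset.sum_congr rfl fun ℓ hℓ => ?_
      have hℓk := Finset.mem_range.1 hℓ
      rw [tdigit_succ_split hℓk m0.isLt]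
      congr 2 <;> omega
    have e2 : (∑ ℓ ∈ Finset.range k,
        tdigit (k + 1) (ℓ + 1) ((splitEquiv k (a, m0) : ℕ)) * tdigit (k + 1) (k + 1 - 1 - ℓ) (j' : ℕ)) =
        ∑ ℓ ∈ Finset.range k, tdigit k ℓ (m0 : ℕ) * tdigit (k + 1) (k - ℓ) (j' : ℕ) := by
      refine Finset.sum_congr rfl fun ℓ hℓ => ?_
      have hℓk := Finset.mem_range.1 hℓ
      rw [splitEquiv_val, tdigit_succ_split hℓk m0.isLt]
      congr 2 <;> omega
    rw [e1, e2]
    have hcomb : χ (((a : ℕ) * tdigit (k + 1) k (j : ℕ) +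
          ∑ ℓ ∈ Finset.range k, tdigit k ℓ (m0 : ℕ) * tdigit (k + 1) (k - 1 - ℓ) (j : ℕ) : ℕ)) *
        χ (-((∑ ℓ ∈ Finset.range k, tdigit k ℓ (m0 : ℕ) * tdigit (k + 1) (k - ℓ) (j' : ℕ) : ℕ) : ℤ)) =
        χ ((a : ℕ) * tdigit (k + 1) k (j : ℕ)) *
          χ (∑ ℓ ∈ Finset.range k, (tdigit k ℓ (m0 : ℕ) : ℤ) *
              ((tdigit (k + 1) (k - 1 - ℓ) (j : ℕ) : ℤ) - (tdigit (k + 1) (k - ℓ) (j' : ℕ) : ℤ))) := by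
      rw [← χ_add, ← χ_add]
      congr 1
      push_cast
      simp only [mul_sub]
      rw [Finset.sum_sub_distrib]
      ring
    rw [mul_mul_mul_comm, hcomb, ← pow_add, show k + 1 + k = 2 * k + 1 by omega,
      ← mul_assoc]
  · exact mul_zero _

/-- for `N = 3^{k+1}`, the Walsh quantization `W_N*·diag(W_{N/3},0,W_{N/3})`
of the open baker's map coincides, under the ternary-digit identification
`ℂ^{3^{k+1}} ≅ (ℂ³)^{⊗(k+1)}`, with the shift-type operator `T_{k+1}`. -/
theorem stmt_9 (k : ℕ) (j j' : Fin (3 ^ (k + 1))) :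
    ((Walsh (k + 1))ᴴ * WalshBlock k) j j' =
      Tbaker (k + 1) (tword (k + 1) (j : ℕ)) (tword (k + 1) (j' : ℕ)) := by
  have hp : (0:ℕ) < 3 ^ k := by positivity
  have h3 : (3:ℕ) ^ (k + 1) = 3 ^ k * 3 := pow_succ 3 k
  have hbl : (j' : ℕ) / 3 ^ k < 3 := Nat.div_lt_of_lt_mul (by have := j'.isLt; omega)
  rw [Matrix.mul_apply]
  simp only [Matrix.conjTranspose_apply]
  rw [← Equiv.sum_comp (splitEquiv k) (fun m => star (Walsh (k + 1) m j) * WalshBlock k m j'),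
    Fintype.sum_prod_type]
  simp only [term_eq]
  show _ = Matrix.of (fun ε' ε => if ∀ i : Fin k, ε' i.castSucc = ε i.succ
      then Mbaker (ε' (Fin.last k)) (ε 0) else 0) (tword (k + 1) (j : ℕ)) (tword (k + 1) (j' : ℕ))
  rw [Matrix.of_apply]
  have htw0 : ((tword (k + 1) (j' : ℕ) 0 : Fin 3) : ℕ) = (j' : ℕ) / 3 ^ k := by
    show tdigit (k + 1) 0 (j' : ℕ) = _
    unfold tdigit
    rw [show k + 1 - 1 - 0 = k by omega]
    exact Nat.mod_eq_of_lt hbl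
  by_cases hb1 : (j' : ℕ) / 3 ^ k = 1
  · rw [Finset.sum_eq_zero (fun a _ => Finset.sum_eq_zero (fun m0 _ => by
      rw [if_neg]; rintro ⟨-, hne⟩; exact hne hb1))]
    have h1 : tword (k + 1) (j' : ℕ) 0 = 1 := Fin.ext (by rw [htw0, hb1]; rfl)
    rw [h1]
    split_ifs
    · simp [Mbaker]
    · rfl
  · rw [Fintype.sum_eq_single (⟨(j' : ℕ) / 3 ^ k, hbl⟩ : Fin 3)
      (fun a ha => Finset.sum_eq_zero fun m0 _ => by
        rw [if_neg]; rintro ⟨heq, -⟩; exact ha (Fin.ext heq))]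
    simp only [if_pos (show ((⟨(j' : ℕ) / 3 ^ k, hbl⟩ : Fin 3) : ℕ) = (j' : ℕ) / 3 ^ k ∧
      (j' : ℕ) / 3 ^ k ≠ 1 from ⟨rfl, hb1⟩)]
    simp only [true_and, ne_eq, hb1, not_false_eq_true, ite_true]
    rw [← Finset.mul_sum]
    have hCS := CS k (fun ℓ => (tdigit (k + 1) (k - 1 - ℓ) (j : ℕ) : ℤ) -
      (tdigit (k + 1) (k - ℓ) (j' : ℕ) : ℤ))
    rw [hCS]
    have hprod : (∏ ℓ ∈ Finset.range k, if (3:ℤ) ∣ ((tdigit (k + 1) (k - 1 - ℓ) (j : ℕ) : ℤ) -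
          (tdigit (k + 1) (k - ℓ) (j' : ℕ) : ℤ)) then (3:ℂ) else 0)
        = if (∀ i : Fin k, tword (k + 1) (j : ℕ) i.castSucc = tword (k + 1) (j' : ℕ) i.succ)
          then (3:ℂ) ^ k else 0 := by
      by_cases hC : ∀ i : Fin k, tword (k + 1) (j : ℕ) i.castSucc = tword (k + 1) (j' : ℕ) i.succ
      · rw [if_pos hC]
        have hfac : ∀ ℓ ∈ Finset.range k,
            (if (3:ℤ) ∣ ((tdigit (k + 1) (k - 1 - ℓ) (j : ℕ) : ℤ) -
              (tdigit (k + 1) (k - ℓ) (j' : ℕ) : ℤ)) then (3:ℂ) else 0) = 3 := by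
          intro ℓ hℓ
          have hℓk := Finset.mem_range.1 hℓ
          have h2 : tdigit (k + 1) (k - 1 - ℓ) (j : ℕ) = tdigit (k + 1) (k - 1 - ℓ + 1) (j' : ℕ) :=
            congrArg Fin.val (hC ⟨k - 1 - ℓ, by omega⟩)
          have hidx : k - 1 - ℓ + 1 = k - ℓ := by omega
          rw [h2, hidx, sub_self]
          simp
        rw [Finset.prod_congr rfl hfac, Finset.prod_const, Finset.card_range]
      · rw [if_neg hC]
        push_neg at hC
        obtain ⟨i, hi⟩ := hC
        refine Finset.prod_eq_zero (Finset.mem_range.2 (show k - 1 - (i : ℕ) < k by omega)) ?_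
        rw [if_neg]
        intro hdvd
        apply hi
        apply Fin.ext
        show tdigit (k + 1) (i : ℕ) (j : ℕ) = tdigit (k + 1) ((i : ℕ) + 1) (j' : ℕ)
        have hx := tdigit_lt (k + 1) (k - 1 - (k - 1 - (i : ℕ))) (j : ℕ)
        have e1 : k - 1 - (k - 1 - (i : ℕ)) = (i : ℕ) := by have := i.isLt; omega
        have e2 : k - (k - 1 - (i : ℕ)) = (i : ℕ) + 1 := by have := i.isLt; omega
        rw [e1, e2] at hdvd
        have hb1' := tdigit_lt (k + 1) (i : ℕ) (j : ℕ)
        have hb2' := tdigit_lt (k + 1) ((i : ℕ) + 1) (j' : ℕ)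
        omega
    rw [hprod]
    by_cases hC : ∀ i : Fin k, tword (k + 1) (j : ℕ) i.castSucc = tword (k + 1) (j' : ℕ) i.succ
    · rw [if_pos hC, if_pos hC]
      show _ = Matrix.of (fun a b : Fin 3 => if b = 1 then 0
          else ((Real.sqrt 3 : ℝ) : ℂ)⁻¹ *
            Complex.exp (2 * Real.pi * Complex.I * (a : ℕ) * (b : ℕ) / 3))
          (tword (k + 1) (j : ℕ) (Fin.last k)) (tword (k + 1) (j' : ℕ) 0)
      rw [Matrix.of_apply, if_neg (show ¬ tword (k + 1) (j' : ℕ) 0 = 1 from fun h =>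
        hb1 (by rw [← htw0, h]; rfl))]
      rw [mul_right_comm, c_scalar]
      congr 1
      unfold χ
      congr 1
      have hlast : ((tword (k + 1) (j : ℕ) (Fin.last k) : Fin 3) : ℕ) = tdigit (k + 1) k (j : ℕ) := rfl
      rw [htw0, hlast]
      generalize (j' : ℕ) / 3 ^ k = b
      generalize tdigit (k + 1) k (j : ℕ) = t
      push_cast
      ring
    · rw [if_neg hC, if_neg hC, mul_zero]
end
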